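/- Let w ∈ {0,1}^* be a word of length at least 3 that contains exactly n kinks. Then f18(w) contains m kinks with m ≤ n; moreover, if w is stable, then m ≡ n (mod 2). -/
import Mathlib


open Filter MeasureTheory

/-- The local rule of ECA 18. -/
def rule18 (a b c : Bool) : Bool := (!a && !b && c) || (a && !b && !c)

/-- The local rule of ECA 90. -/
def rule90 (a _b c : Bool) : Bool := xor a c

/-- ECA 18 acting on configurations. -/
def f18C (x : ℤ → Bool) : ℤ → Bool := fun i => rule18 (x (i - 1)) (x i) (x (i + 1))

/-- ECA 90 acting on configurations. -/
def f90C (x : ℤ → Bool) : ℤ → Bool := fun i => rule90 (x (i - 1)) (x i) (x (i + 1))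

/-- Applying a radius-1 local rule to a finite word (shortens it by 2). -/
def mapWord (R : Bool → Bool → Bool → Bool) (w : List Bool) : List Bool :=
  (List.range (w.length - 2)).map fun i =>
    R (w.getD i false) (w.getD (i + 1) false) (w.getD (i + 2) false)

/-- ECA 18 acting on finite words. -/
def f18W : List Bool → List Bool := mapWord rule18

/-- ECA 90 acting on finite words. -/
def f90W : List Bool → List Bool := mapWord rule90

/-- The kink `1 0^(2k) 1`. -/
def kinkWord (k : ℕ) : List Bool := true :: (List.replicate (2 * k) false ++ [true])

/-- A kink occurs in the word `w` at position `i`. -/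
def kinkAtW (w : List Bool) (i : ℕ) : Prop :=
  ∃ k, (w.drop i).take (2 * k + 2) = kinkWord k

/-- The number of kinks in a finite word: the number of positions where a kink occurs. -/
noncomputable def kinkCount (w : List Bool) : ℕ := {i : ℕ | kinkAtW w i}.ncard

/-- A kink occurs in the configuration `x` at position `i`. -/
def kinkAtC (x : ℤ → Bool) (i : ℤ) : Prop :=
  ∃ k, ∀ j : ℕ, j < 2 * k + 2 → x (i + j) = (kinkWord k).getD j false

/-- The configuration `x` contains exactly `m` kinks: the set of positions where a kink
occurs is finite of cardinality `m` (equivalently, `g_x(n)` tends to `m`). -/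
def configKinks (x : ℤ → Bool) (m : ℕ) : Prop :=
  {i : ℤ | kinkAtC x i}.Finite ∧ {i : ℤ | kinkAtC x i}.ncard = m

/-- Left unstable words: the regular language `(ε+0)(10)^* 11 (0+1)^*`. -/
def leftUnstable (w : List Bool) : Prop :=
  ∃ z t : List Bool, ∃ n : ℕ, (z = [] ∨ z = [false]) ∧
    w = z ++ (List.replicate n [true, false]).flatten ++ [true, true] ++ t

/-- Right unstable words: the regular language `(0+1)^* 11 (01)^* (ε+0)`. -/
def rightUnstable (w : List Bool) : Prop :=
  ∃ z s : List Bool, ∃ n : ℕ, (z = [] ∨ z = [false]) ∧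
    w = s ++ [true, true] ++ (List.replicate n [false, true]).flatten ++ z

/-- Stable words: those that are neither left nor right unstable. -/
def stable (w : List Bool) : Prop := ¬ (leftUnstable w ∨ rightUnstable w)

/-- The finite extension `Σ(w)`: words `a ++ w ++ b` with the same number of kinks as `w`. -/
def extW (w : List Bool) : Set (List Bool) :=
  {u | (∃ a b : List Bool, u = a ++ w ++ b) ∧ kinkCount u = kinkCount w}

/-- The extension `Σ̃(w, p)`: configurations containing `w` at position `p`,
with the same number of kinks as `w`. -/
def extC (w : List Bool) (p : ℤ) : Set (ℤ → Bool) :=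
  {x | (∀ j : ℕ, j < w.length → x (p + j) = w.getD j false) ∧ configKinks x (kinkCount w)}

/-- The cylinder set `[w]_i`. -/
def cyl (w : List Bool) (i : ℤ) : Set (ℤ → Bool) :=
  {x | ∀ j : ℕ, j < w.length → x (i + j) = w.getD j false}


namespace Rule18Proof

structure St where
  b0 : Bool
  b1 : Bool
  he : Bool
  ho : Bool
  ve : Bool
  vo : Bool
  fA : Bool
  fB : Bool
  al : Bool
  al0 : Bool
  ru : Bool
  p1 : Option Bool
  p0 : Option Bool
  fp : Option Bool
  fp0 : Option Bool
  rt : Option Bool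
deriving DecidableEq

def flipO : Option Bool → Option Bool
  | none => none
  | some b => some (!b)

def initSt (a b : Bool) : St :=
  { b0 := a, b1 := b, he := a, ho := !a && b, ve := false, vo := false,
    fA := a && b, fB := false, al := a && !b, al0 := !a && b, ru := a && b,
    p1 := if a then some b else none,
    p0 := if !a && b then some false else none,
    fp := if a then some b else none,
    fp0 := if !a && b then some false else none,
    rt := if a then some b else if b then some false else none }

def Tst (a : Bool) (s : St) : St :=
  { b0 := a, b1 := s.b0,
    he := a || s.ho, ho := !a && s.he,
    ve := rule18 a s.b0 s.b1 || s.vo, vo := !(rule18 a s.b0 s.b1) && s.ve,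
    fA := a && (s.b0 || s.fB), fB := !a && s.fA,
    al := a && s.al0, al0 := !a && s.al,
    ru := s.ru || (a && s.al),
    p1 := if a then (if s.b0 then flipO s.p1 else s.p0) else none,
    p0 := if a then none else s.p1,
    fp := if a then (if s.b0 then flipO s.fp else if s.b1 then s.fp0 else some false) else none,
    fp0 := if a then none else s.fp,
    rt := if a then
        (match s.p1 with
          | some b => some (!b)
          | none => match s.p0 with
            | some b => some b
            | none => s.rt)
      else s.rt }

def stw : List Bool → St
  | a :: b :: c :: l => Tst a (stw (b :: c :: l))
  | [a, b] => initSt a b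
  | _ => initSt false false

def gTab : List (St × ℕ) :=
  [(⟨false, false, false, false, false, false, false, false, false, false, false, none, none, none, none, none⟩, 0),
  (⟨false, true, false, true, false, false, false, false, false, true, false, none, some false, none, some false, some false⟩, 0),
  (⟨true, false, true, false, false, false, false, false, true, false, false, some false, none, some false, none, some false⟩, 0),
  (⟨true, true, true, false, false, false, true, false, false, false, true, some true, none, some true, none, some true⟩, 1),
  (⟨true, false, true, false, true, false, false, false, false, false, false, none, none, some false, none, none⟩, 0),
  (⟨false, false, true, false, true, false, false, false, false, false, false, none, none, none, none, some false⟩, 0),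
  (⟨false, true, false, true, false, false, false, true, false, false, true, none, some true, none, some true, some true⟩, 1),
  (⟨true, true, true, false, false, false, true, false, false, false, true, some false, none, some false, none, some false⟩, 2),
  (⟨false, true, false, true, false, true, false, false, false, false, false, none, none, none, some false, none⟩, 0),
  (⟨true, true, true, false, false, true, true, false, false, false, false, none, none, some true, none, none⟩, 1),
  (⟨false, false, false, true, false, true, false, false, false, false, false, none, none, none, none, some false⟩, 0),
  (⟨true, false, true, false, true, false, false, false, false, false, false, none, none, some false, none, some false⟩, 0),
  (⟨false, false, true, false, true, false, false, false, false, false, true, none, none, none, none, some true⟩, 1),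
  (⟨true, false, true, false, false, false, true, false, false, false, true, some true, none, some true, none, some true⟩, 1),
  (⟨false, true, false, true, false, false, false, true, false, false, true, none, some false, none, some false, some false⟩, 2),
  (⟨false, false, true, false, true, false, false, false, false, false, false, none, none, none, none, none⟩, 0),
  (⟨false, true, false, true, true, false, false, true, false, false, false, none, none, none, some true, none⟩, 1),
  (⟨true, true, true, false, true, false, true, false, false, false, false, none, none, some false, none, none⟩, 2),
  (⟨false, true, false, true, false, true, false, false, false, false, false, none, none, none, some false, some false⟩, 0),
  (⟨true, true, true, false, false, true, true, false, false, false, false, none, none, some true, none, some false⟩, 1),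
  (⟨false, false, false, true, false, true, false, false, false, false, true, none, none, none, none, some true⟩, 1),
  (⟨true, false, true, false, true, false, false, false, false, false, true, none, none, some false, none, some true⟩, 1),
  (⟨false, false, true, false, true, false, false, false, false, false, true, none, none, none, none, some false⟩, 2),
  (⟨true, false, true, false, false, false, true, false, false, false, true, some false, none, some false, none, some false⟩, 2),
  (⟨false, false, false, true, false, true, false, false, false, false, false, none, none, none, none, none⟩, 0),
  (⟨true, false, true, false, false, true, true, false, false, false, false, none, none, some true, none, none⟩, 1),
  (⟨false, true, false, true, false, true, false, true, false, false, false, none, none, none, some false, none⟩, 2),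
  (⟨false, true, false, true, true, false, false, true, false, false, false, none, none, none, some true, some false⟩, 1),
  (⟨true, true, true, false, true, false, true, false, false, false, false, none, none, some false, none, some false⟩, 2),
  (⟨false, true, false, true, false, true, false, false, false, false, true, none, none, none, some false, some true⟩, 1),
  (⟨true, true, true, false, false, true, true, false, false, false, true, none, none, some true, none, some true⟩, 2),
  (⟨false, false, false, true, false, true, false, false, false, false, true, none, none, none, none, some false⟩, 2),
  (⟨true, false, true, false, true, false, false, false, false, false, true, none, none, some false, none, some false⟩, 2),
  (⟨true, false, true, false, true, false, true, false, false, false, false, none, none, some false, none, none⟩, 2),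
  (⟨true, false, true, false, false, true, true, false, false, false, false, none, none, some true, none, some false⟩, 1),
  (⟨false, true, false, true, false, true, false, true, false, false, false, none, none, none, some false, some false⟩, 2),
  (⟨false, true, false, true, true, false, false, true, false, false, true, none, none, none, some true, some true⟩, 2),
  (⟨true, true, true, false, true, false, true, false, false, false, true, none, none, some false, none, some true⟩, 3),
  (⟨false, true, false, true, false, true, false, false, false, false, true, none, none, none, some false, some false⟩, 2),
  (⟨true, true, true, false, false, true, true, false, false, false, true, none, none, some true, none, some false⟩, 3),
  (⟨true, false, true, false, true, false, true, false, false, false, false, none, none, some false, none, some false⟩, 2),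
  (⟨true, false, true, false, false, true, true, false, false, false, true, none, none, some true, none, some true⟩, 2),
  (⟨false, true, false, true, false, true, false, true, false, false, true, none, none, none, some false, some true⟩, 3),
  (⟨false, true, false, true, true, false, false, true, false, false, true, none, none, none, some true, some false⟩, 3),
  (⟨true, true, true, false, true, false, true, false, false, false, true, none, none, some false, none, some false⟩, 4),
  (⟨true, false, true, false, true, false, true, false, false, false, true, none, none, some false, none, some true⟩, 3),
  (⟨true, false, true, false, false, true, true, false, false, false, true, none, none, some true, none, some false⟩, 3),
  (⟨false, true, false, true, false, true, false, true, false, false, true, none, none, none, some false, some false⟩, 4),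
  (⟨true, false, true, false, true, false, true, false, false, false, true, none, none, some false, none, some false⟩, 4)]

def Rl : List St := gTab.map Prod.fst

def gv (s : St) : ℕ := ((gTab.find? fun p => decide (p.1 = s)).map Prod.snd).getD 0

/-! ### Word predicates -/

def HKe (w : List Bool) : Prop := ∃ k, w.take (2 * k + 1) = List.replicate (2 * k) false ++ [true]

def HKo (w : List Bool) : Prop := ∃ k, w.take (2 * k + 2) = List.replicate (2 * k + 1) false ++ [true]

def LAp (w : List Bool) : Prop :=
  ∃ (n : ℕ) (t : List Bool), w = (List.replicate n [true, false]).flatten ++ [true, true] ++ t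

def LBp (w : List Bool) : Prop :=
  ∃ (n : ℕ) (t : List Bool),
    w = false :: ((List.replicate n [true, false]).flatten ++ [true, true] ++ t)

def AltP (w : List Bool) : Prop :=
  ∃ (n : ℕ) (z : List Bool), (z = [] ∨ z = [false]) ∧
    w = true :: ((List.replicate n [false, true]).flatten ++ z)

def Alt0P (w : List Bool) : Prop :=
  ∃ (n : ℕ) (z : List Bool), (z = [] ∨ z = [false]) ∧
    w = (List.replicate n [false, true]).flatten ++ z

theorem HKe_nil : ¬ HKe [] := by
  rintro ⟨k, h⟩
  have := congrArg List.length h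
  simp at this

theorem HKo_nil : ¬ HKo [] := by
  rintro ⟨k, h⟩
  have := congrArg List.length h
  simp at this

theorem HKe_cons (x : Bool) (u : List Bool) :
    HKe (x :: u) ↔ x = true ∨ (x = false ∧ HKo u) := by
  constructor
  · rintro ⟨k, h⟩
    rcases k with _ | k
    · norm_num [List.take_succ_cons] at h
      exact Or.inl h
    · have e1 : 2 * (k + 1) + 1 = (2 * k + 2) + 1 := by ring
      have e2 : 2 * (k + 1) = (2 * k + 1) + 1 := by ring
      rw [e1, e2, List.take_succ_cons, List.replicate_succ] at h
      simp only [List.cons_append, List.cons.injEq] at h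
      exact Or.inr ⟨h.1, k, h.2⟩
  · rintro (rfl | ⟨rfl, k, h⟩)
    · exact ⟨0, by simp⟩
    · refine ⟨k + 1, ?_⟩
      have e1 : 2 * (k + 1) + 1 = (2 * k + 2) + 1 := by ring
      have e2 : 2 * (k + 1) = (2 * k + 1) + 1 := by ring
      rw [e1, e2, List.take_succ_cons, List.replicate_succ, h]
      simp

theorem HKo_cons (x : Bool) (u : List Bool) :
    HKo (x :: u) ↔ x = false ∧ HKe u := by
  constructor
  · rintro ⟨k, h⟩
    have e1 : 2 * k + 2 = (2 * k + 1) + 1 := by ring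
    have e2 : 2 * k + 1 = (2 * k) + 1 := by ring
    rw [e1, List.take_succ_cons, e2, List.replicate_succ] at h
    simp only [List.cons_append, List.cons.injEq] at h
    exact ⟨h.1, k, h.2⟩
  · rintro ⟨rfl, k, h⟩
    refine ⟨k, ?_⟩
    have e1 : 2 * k + 2 = (2 * k + 1) + 1 := by ring
    have e2 : 2 * k + 1 = (2 * k) + 1 := by ring
    rw [e1, List.take_succ_cons, e2, List.replicate_succ, h]
    simp

theorem kinkAtW_zero (x : Bool) (u : List Bool) :
    kinkAtW (x :: u) 0 ↔ x = true ∧ HKe u := by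
  unfold kinkAtW kinkWord HKe
  simp only [List.drop_zero]
  constructor
  · rintro ⟨k, h⟩
    have e : 2 * k + 2 = (2 * k + 1) + 1 := by ring
    rw [e, List.take_succ_cons] at h
    simp only [List.cons.injEq] at h
    exact ⟨h.1, k, h.2⟩
  · rintro ⟨rfl, k, h⟩
    refine ⟨k, ?_⟩
    have e : 2 * k + 2 = (2 * k + 1) + 1 := by ring
    rw [e, List.take_succ_cons, h]

theorem kinkAtW_succ (x : Bool) (u : List Bool) (i : ℕ) :
    kinkAtW (x :: u) (i + 1) ↔ kinkAtW u i := by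
  unfold kinkAtW
  rw [List.drop_succ_cons]

theorem kinkAtW_lt {w : List Bool} {i : ℕ} (h : kinkAtW w i) : i < w.length := by
  obtain ⟨k, hk⟩ := h
  have hl := congrArg List.length hk
  simp [kinkWord] at hl
  omega

theorem kinkSet_finite (w : List Bool) : {i : ℕ | kinkAtW w i}.Finite := by
  apply Set.Finite.subset (Set.finite_Iio w.length)
  intro i hi
  exact kinkAtW_lt hi

theorem kinkCount_nil : kinkCount [] = 0 := by
  have h : {i : ℕ | kinkAtW [] i} = ∅ := by
    ext i
    simp only [Set.mem_setOf_eq, Set.mem_empty_iff_false, iff_false]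
    intro h
    have := kinkAtW_lt h
    simp at this
  simp [kinkCount, h]

theorem shift_pos {P : ℕ → Prop} (hf : {i | P (i + 1)}.Finite) (h0 : P 0) :
    {i | P i}.ncard = {i | P (i + 1)}.ncard + 1 := by
  have hinj : Function.Injective (fun i : ℕ => i + 1) := add_left_injective 1
  have hset : {i | P i} = insert 0 ((fun i => i + 1) '' {i | P (i + 1)}) := by
    ext i
    cases i with
    | zero => simp [h0]
    | succ j =>
      simp only [Set.mem_setOf_eq, Set.mem_insert_iff, Set.mem_image]
      constructor
      · intro h
        exact Or.inr ⟨j, h, rfl⟩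
      · rintro (h | ⟨x, hx, hxe⟩)
        · exact absurd h (by omega)
        · have hxe' : x + 1 = j + 1 := hxe
          have : x = j := by omega
          subst this
          exact hx
  rw [hset, Set.ncard_insert_of_notMem (by simp) (hf.image _),
    Set.ncard_image_of_injective _ hinj]

theorem shift_neg {P : ℕ → Prop} (h0 : ¬ P 0) :
    {i | P i}.ncard = {i | P (i + 1)}.ncard := by
  have hinj : Function.Injective (fun i : ℕ => i + 1) := add_left_injective 1
  have hset : {i | P i} = (fun i => i + 1) '' {i | P (i + 1)} := by
    ext i
    cases i with
    | zero => simp [h0]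
    | succ j =>
      simp only [Set.mem_setOf_eq, Set.mem_image]
      constructor
      · intro h
        exact ⟨j, h, rfl⟩
      · rintro ⟨x, hx, hxe⟩
        have hxe' : x + 1 = j + 1 := hxe
        have : x = j := by omega
        subst this
        exact hx
  rw [hset, Set.ncard_image_of_injective _ hinj]

theorem kinkCount_cons_pos (u : List Bool) (h : HKe u) :
    kinkCount (true :: u) = kinkCount u + 1 := by
  unfold kinkCount
  have hs : {i | kinkAtW (true :: u) (i + 1)} = {i | kinkAtW u i} := by
    ext i
    exact kinkAtW_succ true u i
  have := shift_pos (P := kinkAtW (true :: u))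
    (by rw [hs]; exact kinkSet_finite u) ((kinkAtW_zero true u).mpr ⟨rfl, h⟩)
  rw [this, hs]

theorem kinkCount_cons_neg {x : Bool} {u : List Bool} (h : ¬ (x = true ∧ HKe u)) :
    kinkCount (x :: u) = kinkCount u := by
  unfold kinkCount
  have hs : {i | kinkAtW (x :: u) (i + 1)} = {i | kinkAtW u i} := by
    ext i
    exact kinkAtW_succ x u i
  have := shift_neg (P := kinkAtW (x :: u)) (fun hc => h ((kinkAtW_zero x u).mp hc))
  rw [this, hs]

theorem f18W_two (a b : Bool) : f18W [a, b] = [] := rfl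

theorem f18W_cons (a b c : Bool) (l : List Bool) :
    f18W (a :: b :: c :: l) = rule18 a b c :: f18W (b :: c :: l) := by
  unfold f18W mapWord
  have e : (a :: b :: c :: l).length - 2 = ((b :: c :: l).length - 2) + 1 := by
    simp
  rw [e, List.range_succ_eq_map, List.map_cons, List.map_map]
  simp [Function.comp_def]

/-! ### State exactness -/

theorem stw_b0 : ∀ (l : List Bool) (a b : Bool),
    (stw (a :: b :: l)).b0 = a ∧ (stw (a :: b :: l)).b1 = b := by
  intro l
  induction l with
  | nil => intro a b; exact ⟨rfl, rfl⟩
  | cons c l ih => intro a b; exact ⟨rfl, (ih b c).1⟩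

theorem stw_he : ∀ (l : List Bool) (a b : Bool),
    ((stw (a :: b :: l)).he = true ↔ HKe (a :: b :: l)) ∧
    ((stw (a :: b :: l)).ho = true ↔ HKo (a :: b :: l)) := by
  intro l
  induction l with
  | nil =>
    intro a b
    cases a <;> cases b <;>
      constructor <;>
        simp [stw, initSt, HKe_cons, HKo_cons, HKe_nil, HKo_nil]
  | cons c l ih =>
    intro a b
    have hs := ih b c
    constructor
    · show (a || (stw (b :: c :: l)).ho) = true ↔ _
      rw [HKe_cons]
      cases a <;> simp [hs.2]
    · show (!a && (stw (b :: c :: l)).he) = true ↔ _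
      rw [HKo_cons]
      cases a <;> simp [hs.1]

theorem stw_ve : ∀ (l : List Bool) (a b : Bool),
    ((stw (a :: b :: l)).ve = true ↔ HKe (f18W (a :: b :: l))) ∧
    ((stw (a :: b :: l)).vo = true ↔ HKo (f18W (a :: b :: l))) := by
  intro l
  induction l with
  | nil =>
    intro a b
    rw [f18W_two]
    constructor
    · show (false : Bool) = true ↔ _
      simp [HKe_nil]
    · show (false : Bool) = true ↔ _
      simp [HKo_nil]
  | cons c l ih =>
    intro a b
    have hs := ih b c
    have hb := stw_b0 l b c
    rw [f18W_cons a b c l]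
    constructor
    · show (rule18 a (stw (b :: c :: l)).b0 (stw (b :: c :: l)).b1 || (stw (b :: c :: l)).vo)
        = true ↔ _
      rw [hb.1, hb.2, HKe_cons]
      cases h : rule18 a b c <;> simp [h, hs.2]
    · show (!(rule18 a (stw (b :: c :: l)).b0 (stw (b :: c :: l)).b1) && (stw (b :: c :: l)).ve)
        = true ↔ _
      rw [hb.1, hb.2, HKo_cons]
      cases h : rule18 a b c <;> simp [h, hs.1]

theorem stw_flags : ∀ (l : List Bool) (a b : Bool),
    ((stw (a :: b :: l)).fA = true → LAp (a :: b :: l)) ∧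
    ((stw (a :: b :: l)).fB = true → LBp (a :: b :: l)) ∧
    ((stw (a :: b :: l)).al = true → AltP (a :: b :: l)) ∧
    ((stw (a :: b :: l)).al0 = true → Alt0P (a :: b :: l)) ∧
    ((stw (a :: b :: l)).ru = true → rightUnstable (a :: b :: l)) := by
  intro l
  induction l with
  | nil =>
    intro a b
    refine ⟨?_, ?_, ?_, ?_, ?_⟩ <;> intro h <;> cases a <;> cases b <;>
      simp [stw, initSt] at h ⊢
    · exact ⟨0, [], by simp⟩
    · exact ⟨0, [false], Or.inr rfl, by simp⟩
    · exact ⟨1, [], Or.inl rfl, by simp⟩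
    · exact ⟨[], [], 0, Or.inl rfl, by simp [rightUnstable]⟩
  | cons c l ih =>
    intro a b
    have hs := ih b c
    have hb := stw_b0 l b c
    refine ⟨?_, ?_, ?_, ?_, ?_⟩ <;> intro h
    · replace h : (a && ((stw (b :: c :: l)).b0 || (stw (b :: c :: l)).fB)) = true := h
      rw [hb.1] at h
      rw [Bool.and_eq_true] at h
      obtain ⟨rfl, h2⟩ := h
      rw [Bool.or_eq_true] at h2
      rcases h2 with hb1 | hfB
      · subst hb1
        exact ⟨0, c :: l, by simp⟩
      · obtain ⟨n, t, ht⟩ := hs.2.1 hfB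
        refine ⟨n + 1, t, ?_⟩
        rw [List.replicate_succ]
        simp only [List.flatten_cons, List.cons_append, List.append_assoc]
        rw [ht]
        simp
    · replace h : (!a && (stw (b :: c :: l)).fA) = true := h
      rw [Bool.and_eq_true] at h
      obtain ⟨ha, hfA⟩ := h
      have : a = false := by cases a <;> simp_all
      subst this
      obtain ⟨n, t, ht⟩ := hs.1 hfA
      exact ⟨n, t, by rw [ht]⟩
    · replace h : (a && (stw (b :: c :: l)).al0) = true := h
      rw [Bool.and_eq_true] at h
      obtain ⟨rfl, hal0⟩ := h
      obtain ⟨n, z, hz, hzz⟩ := hs.2.2.2.1 hal0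
      exact ⟨n, z, hz, by rw [hzz]⟩
    · replace h : (!a && (stw (b :: c :: l)).al) = true := h
      rw [Bool.and_eq_true] at h
      obtain ⟨ha, hal⟩ := h
      have : a = false := by cases a <;> simp_all
      subst this
      obtain ⟨n, z, hz, hzz⟩ := hs.2.2.1 hal
      refine ⟨n + 1, z, hz, ?_⟩
      rw [List.replicate_succ]
      simp only [List.flatten_cons, List.cons_append, List.append_assoc]
      rw [hzz]
      simp
    · replace h : ((stw (b :: c :: l)).ru || (a && (stw (b :: c :: l)).al)) = true := h
      rw [Bool.or_eq_true] at h
      rcases h with hru | hal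
      · obtain ⟨z, s, n, hz, hw⟩ := hs.2.2.2.2 hru
        exact ⟨z, a :: s, n, hz, by rw [hw]; simp⟩
      · rw [Bool.and_eq_true] at hal
        obtain ⟨rfl, hal'⟩ := hal
        obtain ⟨n, z, hz, hzz⟩ := hs.2.2.1 hal'
        exact ⟨z, [], n, hz, by rw [hzz]; simp⟩

/-! ### Decidable checks -/

theorem closure : ∀ s ∈ Rl, ∀ a : Bool, Tst a s ∈ Rl := by decide

theorem checkStep : ∀ s ∈ Rl, ∀ a : Bool,
    gv (Tst a s) + (if rule18 a s.b0 s.b1 && s.ve then 1 else 0) ≤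
      gv s + (if a && s.he then 1 else 0) ∧
    (gv s + (if a && s.he then 1 else 0) -
      (gv (Tst a s) + (if rule18 a s.b0 s.b1 && s.ve then 1 else 0))) % 2 = 0 := by decide

theorem checkStable : ∀ s ∈ Rl, s.fA = false → s.fB = false → s.ru = false → gv s = 0 := by
  decide

theorem checkInit : ∀ a b : Bool, gv (initSt a b) = if a && b then 1 else 0 := by decide

theorem stw_mem : ∀ (l : List Bool) (a b : Bool), stw (a :: b :: l) ∈ Rl := by
  intro l
  induction l with
  | nil => intro a b; cases a <;> cases b <;> decide
  | cons c l ih => intro a b; exact closure _ (ih b c) a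

/-! ### Main induction -/

theorem kinkCount_two (a b : Bool) :
    kinkCount [a, b] = if a && b then 1 else 0 := by
  have hkb : HKe [b] ↔ b = true := by
    rw [HKe_cons]
    simp [HKo_nil]
  cases a with
  | false =>
    rw [kinkCount_cons_neg (by simp)]
    rw [kinkCount_cons_neg (by simp [HKe_nil])]
    simp [kinkCount_nil]
  | true =>
    cases b with
    | false =>
      rw [kinkCount_cons_neg (by simp [hkb])]
      rw [kinkCount_cons_neg (by simp [HKe_nil])]
      simp [kinkCount_nil]
    | true =>
      rw [kinkCount_cons_pos _ (hkb.mpr rfl)]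
      rw [kinkCount_cons_neg (by simp [HKe_nil])]
      simp [kinkCount_nil]

theorem main : ∀ (l : List Bool) (a b : Bool),
    ∃ e, kinkCount (a :: b :: l) =
      kinkCount (f18W (a :: b :: l)) + 2 * e + gv (stw (a :: b :: l)) := by
  intro l
  induction l with
  | nil =>
    intro a b
    refine ⟨0, ?_⟩
    have h1 : f18W [a, b] = [] := f18W_two a b
    have h2 : stw [a, b] = initSt a b := rfl
    rw [h1, kinkCount_nil, h2, checkInit, kinkCount_two]
    omega
  | cons c l ih =>
    intro a b
    obtain ⟨e, he⟩ := ih b c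
    have hmem := stw_mem l b c
    have hck := checkStep (stw (b :: c :: l)) hmem a
    have hb := stw_b0 l b c
    have hhe := stw_he l b c
    have hve := stw_ve l b c
    set s := stw (b :: c :: l) with hsdef
    have hew : kinkCount (a :: b :: c :: l) =
        kinkCount (b :: c :: l) + (if a && s.he then 1 else 0) := by
      by_cases ha : a = true
      · subst ha
        by_cases hk : HKe (b :: c :: l)
        · have hse : s.he = true := hhe.1.mpr hk
          rw [kinkCount_cons_pos _ hk, hse]
          simp
        · have hse : s.he = false := by
            cases h : s.he
            · rfl
            · exact absurd (hhe.1.mp h) hk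
          rw [kinkCount_cons_neg (fun hc => hk hc.2), hse]
          simp
      · have ha' : a = false := by cases a <;> simp_all
        subst ha'
        rw [kinkCount_cons_neg (by simp)]
        simp
    have hfc := f18W_cons a b c l
    have hev : kinkCount (f18W (a :: b :: c :: l)) =
        kinkCount (f18W (b :: c :: l)) + (if rule18 a s.b0 s.b1 && s.ve then 1 else 0) := by
      rw [hfc, hb.1, hb.2]
      by_cases hr : rule18 a b c = true
      · rw [hr]
        by_cases hk : HKe (f18W (b :: c :: l))
        · have hse : s.ve = true := hve.1.mpr hk
          rw [kinkCount_cons_pos _ hk, hse]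
          simp
        · have hse : s.ve = false := by
            cases h : s.ve
            · rfl
            · exact absurd (hve.1.mp h) hk
          rw [kinkCount_cons_neg (fun hc => hk hc.2), hse]
          simp
      · have hr' : rule18 a b c = false := by cases h : rule18 a b c <;> simp_all
        rw [hr']
        rw [kinkCount_cons_neg (by simp)]
        simp
    obtain ⟨d, hd⟩ : ∃ d, gv s + (if a && s.he then 1 else 0) =
        gv (Tst a s) + (if rule18 a s.b0 s.b1 && s.ve then 1 else 0) + 2 * d :=
      ⟨(gv s + (if a && s.he then 1 else 0) -
        (gv (Tst a s) + (if rule18 a s.b0 s.b1 && s.ve then 1 else 0))) / 2, by omega⟩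
    refine ⟨e + d, ?_⟩
    have hst : stw (a :: b :: c :: l) = Tst a s := rfl
    rw [hew, he, hev, hst]
    omega

end Rule18Proof

/-- ECA 18 cannot increase the number of kinks of a word, and preserves its
parity on stable words. -/
theorem kinkCount_f18W (w : List Bool) (hlen : 3 ≤ w.length) (n : ℕ)
    (hn : kinkCount w = n) :
    kinkCount (f18W w) ≤ n ∧ (stable w → kinkCount (f18W w) % 2 = n % 2) := by
  rcases w with _ | ⟨a, _ | ⟨b, l⟩⟩
  · simp at hlen
  · simp at hlen
  · obtain ⟨e, he⟩ := Rule18Proof.main l a b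
    subst hn
    refine ⟨by omega, ?_⟩
    intro hst
    have hflags := Rule18Proof.stw_flags l a b
    have hA : (Rule18Proof.stw (a :: b :: l)).fA = false := by
      cases h : (Rule18Proof.stw (a :: b :: l)).fA
      · rfl
      · obtain ⟨n', t, ht⟩ := hflags.1 h
        exact absurd (Or.inl ⟨[], t, n', Or.inl rfl, by rw [ht]; simp⟩) hst
    have hB : (Rule18Proof.stw (a :: b :: l)).fB = false := by
      cases h : (Rule18Proof.stw (a :: b :: l)).fB
      · rfl
      · obtain ⟨n', t, ht⟩ := hflags.2.1 h
        exact absurd (Or.inl ⟨[false], t, n', Or.inr rfl, by rw [ht]; simp⟩) hst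
    have hR : (Rule18Proof.stw (a :: b :: l)).ru = false := by
      cases h : (Rule18Proof.stw (a :: b :: l)).ru
      · rfl
      · exact absurd (Or.inr (hflags.2.2.2.2 h)) hst
    have hg := Rule18Proof.checkStable _ (Rule18Proof.stw_mem l a b) hA hB hR
    omega
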